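/- Let G be a finite rooted DAG with root r and let v ∈ V(G) be a non-leaf vertex, and set m := awt(G_v). Then there exists a vertex a ∈ V(G_v) such that awt(G_v^a) ≤ m/2 and awt(G_v^b) > m/2 for every out-neighbour b ∈ N⁺(a). -/

import Mathlib

/-- The set of directed paths from `r` to `v` in the digraph with edge relation `E`,
represented as nonempty vertex lists. -/
def pathsFromTo {V : Type} (E : V → V → Prop) (r v : V) : Set (List V) :=
  {p : List V | p.Chain' E ∧ p.head? = some r ∧ p.getLast? = some v}

/-- The weight `wt_G(v)`: the number of directed paths from the root `r` to `v`. -/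
noncomputable def pathWt {V : Type} (E : V → V → Prop) (r v : V) : ℕ :=
  Set.ncard (pathsFromTo E r v)

/-- The aggregate weight `awt(G) = Σ_{v ∈ V(G)} wt_G(v)`. -/
noncomputable def awt {V : Type} [Fintype V] (E : V → V → Prop) (r : V) : ℕ :=
  ∑ v : V, pathWt E r v

/-- The vertex set of the subgraph `G_s^W`: all vertices `u` such that there is a
directed path `(v_0, …, v_ℓ)` with `v_0 = s`, `v_ℓ = u` and `{v_0, …, v_{ℓ-1}} ∩ W = ∅`. -/
def vertexSet {V : Type} (E : V → V → Prop) (s : V) (W : Set V) : Set V :=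
  {u | ∃ p : List V, p.Chain' E ∧ p.head? = some s ∧ p.getLast? = some u ∧
    ∀ x ∈ p.dropLast, x ∉ W}

/-- The weight of `u` in the subgraph of `G` induced on the vertex set `S`, with root `s`:
the number of directed paths from `s` to `u` all of whose vertices lie in `S`. -/
noncomputable def pathWtIn {V : Type} (E : V → V → Prop) (S : Set V) (s u : V) : ℕ :=
  Set.ncard {p : List V | p.Chain' E ∧ p.head? = some s ∧ p.getLast? = some u ∧
    ∀ x ∈ p, x ∈ S}

/-- The aggregate weight of the rooted DAG `G_s^W` (the induced subgraph of `G` on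
`vertexSet E s W`, rooted at `s`): the sum of the weights of its vertices.
(For `u` outside the vertex set the weight is `0`.) -/
noncomputable def awtSub {V : Type} [Fintype V] (E : V → V → Prop) (s : V) (W : Set V) : ℕ :=
  ∑ u : V, pathWtIn E (vertexSet E s W) s u



-- auxiliary pieces to test
lemma chain_transGen {V : Type} {E : V → V → Prop} :
    ∀ {t : List V} {a x : V}, List.Chain E a t → x ∈ t → Relation.TransGen E a x := by
  intro t
  induction t with
  | nil => intro a x _ hx; simp at hx
  | cons b t' ih =>
    intro a x hc hx
    replace hc := List.isChain_cons_cons.mp hc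
    rcases List.mem_cons.mp hx with rfl | hx
    · exact Relation.TransGen.single hc.1
    · exact (ih hc.2 hx).head hc.1

lemma chain'_nodup {V : Type} {E : V → V → Prop}
    (hacyc : ∀ x : V, ¬ Relation.TransGen E x x) :
    ∀ {p : List V}, p.Chain' E → p.Nodup := by
  intro p
  induction p with
  | nil => intro _; exact List.nodup_nil
  | cons a t ih =>
    intro hc
    have hchain : List.Chain E a t := hc
    refine List.nodup_cons.mpr ⟨fun ha => hacyc a (chain_transGen hchain ha), ih hc.tail⟩

lemma paths_finite {V : Type} [Fintype V] {E : V → V → Prop}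
    (hacyc : ∀ x : V, ¬ Relation.TransGen E x x) (C : List V → Prop) :
    {p : List V | p.Chain' E ∧ C p}.Finite := by
  apply (List.finite_length_le V (Fintype.card V)).subset
  intro p hp
  exact (chain'_nodup hacyc hp.1).length_le_card


lemma mem_vs_self {V : Type} (E : V → V → Prop) (v : V) : v ∈ vertexSet E v ∅ :=
  ⟨[v], List.isChain_singleton v, rfl, rfl, by simp⟩

lemma vs_step {V : Type} {E : V → V → Prop} {v a b : V}
    (ha : a ∈ vertexSet E v ∅) (hab : E a b) : b ∈ vertexSet E v ∅ := by
  obtain ⟨p, hc, hh, hl, -⟩ := ha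
  have hpne : p ≠ [] := by intro h; simp [h] at hh
  refine ⟨p ++ [b], ?_, ?_, ?_, by simp⟩
  · apply List.isChain_append.mpr
    refine ⟨hc, List.isChain_singleton b, ?_⟩
    intro x hx y hy
    simp at hy
    rw [hl] at hx; simp at hx
    exact hx ▸ hy ▸ hab
  · rwa [List.head?_append_of_ne_nil _ hpne]
  · simp [List.getLast?_concat]

lemma vs_self_singleton {V : Type} (E : V → V → Prop) (v : V) :
    vertexSet E v {v} = {v} := by
  ext u
  constructor
  · rintro ⟨p, hc, hh, hl, hd⟩
    match p, hh with
    | [x], hh =>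
      simp at hh hl
      simp [hh] at hl
      exact hl.symm
    | x :: y :: t, hh =>
      exfalso
      simp at hh
      apply hd x
      · simp [List.dropLast]
      · simp [hh]
  · rintro rfl
    exact ⟨[u], List.isChain_singleton u, rfl, rfl, by simp⟩



lemma pathset_self {V : Type} {E : V → V → Prop}
    (hacyc : ∀ x : V, ¬ Relation.TransGen E x x) (v u : V) (p : List V)
    (hp : p ∈ {p : List V | p.Chain' E ∧ p.head? = some v ∧ p.getLast? = some u ∧
      ∀ x ∈ p, x ∈ ({v} : Set V)}) : p = [v] ∧ u = v := by
  obtain ⟨hc, hh, hl, hmem⟩ := hp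
  match p, hh with
  | [x], hh =>
    simp at hh hl
    simp [hh] at hl
    subst hh
    exact ⟨rfl, hl.symm⟩
  | x :: y :: t, hh =>
    exfalso
    simp at hh
    have hy : y ∈ ({v} : Set V) := hmem y (by simp)
    simp at hy
    have : E x y := (List.isChain_cons_cons.mp hc).1
    rw [hh, hy] at this
    exact hacyc v (Relation.TransGen.single this)

lemma pathWtIn_self_one {V : Type} {E : V → V → Prop}
    (hacyc : ∀ x : V, ¬ Relation.TransGen E x x) (v : V) :
    pathWtIn E {v} v v = 1 := by
  unfold pathWtIn
  have : {p : List V | p.Chain' E ∧ p.head? = some v ∧ p.getLast? = some v ∧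
      ∀ x ∈ p, x ∈ ({v} : Set V)} = {[v]} := by
    ext p
    constructor
    · intro hp; exact (pathset_self hacyc v v p hp).1
    · rintro rfl
      exact ⟨List.isChain_singleton v, rfl, rfl, by simp⟩
  rw [this, Set.ncard_singleton]

lemma pathWtIn_self_zero {V : Type} {E : V → V → Prop}
    (hacyc : ∀ x : V, ¬ Relation.TransGen E x x) {v u : V} (hu : u ≠ v) :
    pathWtIn E {v} v u = 0 := by
  unfold pathWtIn
  have : {p : List V | p.Chain' E ∧ p.head? = some v ∧ p.getLast? = some u ∧
      ∀ x ∈ p, x ∈ ({v} : Set V)} = ∅ := by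
    ext p
    simp only [Set.mem_empty_iff_false, iff_false]
    intro hp
    exact hu (pathset_self hacyc v u p hp).2
  rw [this, Set.ncard_empty]

lemma awtSub_self {V : Type} [Fintype V] {E : V → V → Prop}
    (hacyc : ∀ x : V, ¬ Relation.TransGen E x x) (v : V) :
    awtSub E v {v} = 1 := by
  unfold awtSub
  rw [vs_self_singleton]
  rw [Finset.sum_eq_single v]
  · exact pathWtIn_self_one hacyc v
  · intro u _ hu; exact pathWtIn_self_zero hacyc hu
  · intro h; exact absurd (Finset.mem_univ v) h

lemma awtSub_ge_two {V : Type} [Fintype V] {E : V → V → Prop}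
    (hacyc : ∀ x : V, ¬ Relation.TransGen E x x) {v w : V} (hvw : E v w) :
    2 ≤ awtSub E v ∅ := by
  classical
  have hne : v ≠ w := by
    rintro rfl; exact hacyc v (Relation.TransGen.single hvw)
  set S := vertexSet E v ∅ with hS
  have hvS : v ∈ S := mem_vs_self E v
  have hwS : w ∈ S := vs_step hvS hvw
  have h1 : 1 ≤ pathWtIn E S v v := by
    have hfin := paths_finite hacyc
      (fun p => p.head? = some v ∧ p.getLast? = some v ∧ ∀ x ∈ p, x ∈ S)
    refine (Set.ncard_pos hfin).mpr ⟨[v], List.isChain_singleton v, rfl, rfl, by simpa⟩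
  have h2 : 1 ≤ pathWtIn E S v w := by
    have hfin := paths_finite hacyc
      (fun p => p.head? = some v ∧ p.getLast? = some w ∧ ∀ x ∈ p, x ∈ S)
    refine (Set.ncard_pos hfin).mpr ⟨[v, w], ?_, rfl, rfl, ?_⟩
    · exact List.isChain_pair.mpr hvw
    · intro x hx; simp at hx; rcases hx with rfl | rfl <;> assumption
  have hsub : ∑ u ∈ ({v, w} : Finset V), pathWtIn E S v u ≤
      ∑ u : V, pathWtIn E S v u :=
    Finset.sum_le_sum_of_subset (Finset.subset_univ _)
  rw [Finset.sum_pair hne] at hsub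
  unfold awtSub
  rw [← hS]
  omega

/-- in a finite rooted DAG `G` with root `r`, for every non-leaf vertex `v`,
with `m := awt(G_v)`, there is a vertex `a ∈ V(G_v)` such that `awt(G_v^a) ≤ m/2` and
`awt(G_v^b) > m/2` for every out-neighbour `b` of `a`. -/
theorem stmt5 {V : Type} [Fintype V] (E : V → V → Prop) (r : V)
    (hacyc : ∀ x : V, ¬ Relation.TransGen E x x)
    (hroot : ∀ x : V, Relation.ReflTransGen E r x)
    (v : V) (hv : ∃ w, E v w) :
    ∃ a ∈ vertexSet E v ∅,
      2 * awtSub E v {a} ≤ awtSub E v ∅ ∧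
      ∀ b : V, E a b → 2 * awtSub E v {b} > awtSub E v ∅ := by
  obtain ⟨w, hvw⟩ := hv
  have h1 : IsTrans V (fun x y : V => Relation.TransGen E y x) :=
    ⟨fun a b c hab hbc => hbc.trans hab⟩
  have h2 : IsIrrefl V (fun x y : V => Relation.TransGen E y x) :=
    ⟨fun x h => hacyc x h⟩
  have hwf : WellFounded (fun x y : V => Relation.TransGen E y x) :=
    Finite.wellFounded_of_trans_of_irrefl _
  have key : ∀ a : V, a ∈ vertexSet E v ∅ → 2 * awtSub E v {a} ≤ awtSub E v ∅ →
      ∃ a' ∈ vertexSet E v ∅, 2 * awtSub E v {a'} ≤ awtSub E v ∅ ∧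
        ∀ b : V, E a' b → 2 * awtSub E v {b} > awtSub E v ∅ := by
    intro a₀
    refine WellFounded.induction hwf a₀ (C := fun a => a ∈ vertexSet E v ∅ →
      2 * awtSub E v {a} ≤ awtSub E v ∅ →
      ∃ a' ∈ vertexSet E v ∅, 2 * awtSub E v {a'} ≤ awtSub E v ∅ ∧
        ∀ b : V, E a' b → 2 * awtSub E v {b} > awtSub E v ∅) ?_
    intro a ih ha hle
    by_cases hall : ∀ b, E a b → 2 * awtSub E v {b} > awtSub E v ∅
    · exact ⟨a, ha, hle, hall⟩
    · push_neg at hall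
      obtain ⟨b, hab, hb⟩ := hall
      exact ih b (Relation.TransGen.single hab) (vs_step ha hab) hb
  have h0 : 2 * awtSub E v {v} ≤ awtSub E v ∅ := by
    rw [awtSub_self hacyc]
    simpa using awtSub_ge_two hacyc hvw
  exact key v (mem_vs_self E v) h0
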